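/- If P is a pointer list, then cde(P) is a pointer list. -/
import Mathlib


/-- A finite sequence of integers (0-indexed list) is a *pointer list*:
(1) even positive length; (2) unique index of minimum absolute value;
(3) unique index of maximum absolute value; (4) each intermediate absolute
value occurs at exactly one other index; (5) for each even (0-based) index i,
x i ≤ x (i+1) and x i * x (i+1) > 0; (6) for each even (0-based) index i no
entry has absolute value strictly between |x i| and |x (i+1)|. -/
def IsPointerList (P : List ℤ) : Prop :=
  P.length % 2 = 0 ∧ 0 < P.length ∧
  (∃! i, i < P.length ∧ ∀ j < P.length, |P.getD i 0| ≤ |P.getD j 0|) ∧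
  (∃! i, i < P.length ∧ ∀ j < P.length, |P.getD j 0| ≤ |P.getD i 0|) ∧
  (∀ i < P.length, (∃ j < P.length, |P.getD j 0| < |P.getD i 0|) →
      (∃ j < P.length, |P.getD i 0| < |P.getD j 0|) →
      ∃! j, j < P.length ∧ j ≠ i ∧ |P.getD j 0| = |P.getD i 0|) ∧
  (∀ i, i % 2 = 0 → i + 1 < P.length →
      P.getD i 0 ≤ P.getD (i+1) 0 ∧ 0 < P.getD i 0 * P.getD (i+1) 0) ∧
  (∀ i, i % 2 = 0 → i + 1 < P.length →
      ¬ ∃ j < P.length,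
        (|P.getD i 0| < |P.getD j 0| ∧ |P.getD j 0| < |P.getD (i+1) 0|) ∨
        (|P.getD (i+1) 0| < |P.getD j 0| ∧ |P.getD j 0| < |P.getD i 0|))

-- Context directed excision: delete the first adjacent equal pair, if any.
open Classical in
noncomputable def cde (P : List ℤ) : List ℤ :=
  if h : ∃ i, i + 1 < P.length ∧ P.getD i 0 = P.getD (i+1) 0 then
    P.take (Nat.find h) ++ P.drop (Nat.find h + 2)
  else P

-- Context directed reversal: for the minimal i admitting j > i with
-- x i = -(x j) (and the minimal such j), reverse and negate the segment
-- from position i+1 through j.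
open Classical in
noncomputable def cdr (P : List ℤ) : List ℤ :=
  if h : ∃ i, ∃ j, i < j ∧ j < P.length ∧ P.getD i 0 = -(P.getD j 0) then
    let i := Nat.find h
    let j := Nat.find (Nat.find_spec h)
    P.take (i+1) ++ (((P.drop (i+1)).take (j - i)).reverse.map (fun z => -z)) ++
      P.drop (j+1)
  else P

-- Context directed block swap: for the lexicographically least (i, j)
-- admitting k, ℓ with i < j < k < ℓ, x i = x k, x j = x ℓ, interchange
-- the blocks x_{i+1}..x_{j-1} and x_k..x_ℓ.
open Classical in
noncomputable def cds (P : List ℤ) : List ℤ :=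
  if h : ∃ i, ∃ j, ∃ k, ∃ l, i < j ∧ j < k ∧ k < l ∧ l < P.length ∧
      P.getD i 0 = P.getD k 0 ∧ P.getD j 0 = P.getD l 0 then
    let i := Nat.find h
    let j := Nat.find (Nat.find_spec h)
    let k := Nat.find (Nat.find_spec (Nat.find_spec h))
    let l := Nat.find (Nat.find_spec (Nat.find_spec (Nat.find_spec h)))
    P.take (i+1) ++ ((P.drop k).take (l - k + 1)) ++ ((P.drop j).take (k - j)) ++
      ((P.drop (i+1)).take (j - i - 1)) ++ P.drop (l+1)
  else P

/-- The doubling map π: each entry z is replaced by (z, z+1) if z > 0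
and by (z-1, z) if z < 0. -/
def piMap (M : List ℤ) : List ℤ :=
  M.flatMap (fun z => if 0 < z then [z, z + 1] else [z - 1, z])

/-- One step of the HNS algorithm: apply cde if applicable, else cds if
applicable, else cdr. -/
noncomputable def hnsStep (P : List ℤ) : List ℤ :=
  if cde P ≠ P then cde P else if cds P ≠ P then cds P else cdr P


private def delIdx (i k : ℕ) : ℕ := if k < i then k else k + 2

private lemma delIdx_inj {i a b : ℕ} (h : delIdx i a = delIdx i b) : a = b := by
  unfold delIdx at h; split_ifs at h <;> omega

private lemma delIdx_ne {i k : ℕ} : delIdx i k ≠ i ∧ delIdx i k ≠ i + 1 := by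
  unfold delIdx; split_ifs <;> omega

private lemma getD_del (P : List ℤ) (i : ℕ) (hi : i + 1 < P.length) (k : ℕ) :
    (P.take i ++ P.drop (i+2)).getD k 0 = P.getD (delIdx i k) 0 := by
  have hlen : (P.take i).length = i := by
    rw [List.length_take]; omega
  unfold delIdx
  split_ifs with h
  · rw [List.getD_append _ _ _ _ (by rw [hlen]; exact h)]
    simp [List.getD_eq_getElem?_getD, List.getElem?_take, h]
  · rw [List.getD_append_right _ _ _ _ (by rw [hlen]; omega), hlen]
    simp only [List.getD_eq_getElem?_getD, List.getElem?_drop]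
    have h2 : i + 2 + (k - i) = k + 2 := by omega
    rw [h2]

private lemma len_del (P : List ℤ) (i : ℕ) (hi : i + 1 < P.length) :
    (P.take i ++ P.drop (i+2)).length = P.length - 2 := by
  simp only [List.length_append, List.length_take, List.length_drop]
  omega

private lemma key (P : List ℤ) (hP : IsPointerList P) (i : ℕ) (hi : i + 1 < P.length)
    (heq : P.getD i 0 = P.getD (i+1) 0) :
    IsPointerList (P.take i ++ P.drop (i+2)) := by
  obtain ⟨hev, hpos, hmin, hmax, hpair, h5, h6⟩ := hP
  set n := P.length with hn
  set Q := P.take i ++ P.drop (i+2) with hQdef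
  have hQlen : Q.length = n - 2 := len_del P i hi
  have hQget : ∀ k, Q.getD k 0 = P.getD (delIdx i k) 0 := getD_del P i hi
  have hdlt : ∀ k, k < n - 2 → delIdx i k < n := by
    intro k hk; unfold delIdx; split_ifs <;> omega
  have hsurj : ∀ j, j < n → j ≠ i → j ≠ i + 1 → ∃ k, delIdx i k = j ∧ k < Q.length := by
    intro j hj h1 h2
    rw [hQlen]
    refine ⟨if j < i then j else j - 2, ?_, ?_⟩
    · unfold delIdx; split_ifs <;> omega
    · split_ifs <;> omega
  have hlt : ∃ j < n, |P.getD j 0| < |P.getD i 0| := by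
    by_contra hc
    push_neg at hc
    obtain ⟨m, hm, hmu⟩ := hmin
    have e1 : i = m := hmu i ⟨by omega, fun j hj => hc j hj⟩
    have e2 : i + 1 = m := hmu (i+1) ⟨hi, fun j hj => heq ▸ hc j hj⟩
    omega
  have hgt : ∃ j < n, |P.getD i 0| < |P.getD j 0| := by
    by_contra hc
    push_neg at hc
    obtain ⟨m, hm, hmu⟩ := hmax
    have e1 : i = m := hmu i ⟨by omega, fun j hj => hc j hj⟩
    have e2 : i + 1 = m := hmu (i+1) ⟨hi, fun j hj => heq ▸ hc j hj⟩
    omega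
  have hC : ∀ j, j < n → j ≠ i → j ≠ i + 1 → |P.getD j 0| ≠ |P.getD i 0| := by
    intro j hj hji hji1 habs
    obtain ⟨p, hp, hpu⟩ := hpair i (by omega) hlt hgt
    have e1 : i + 1 = p := hpu (i+1) ⟨hi, by omega, by rw [heq]⟩
    have e2 : j = p := hpu j ⟨hj, hji, habs⟩
    omega
  have hlen4 : 4 ≤ n := by
    obtain ⟨j, hj, hjv⟩ := hlt
    have hji : j ≠ i := fun h => by rw [h] at hjv; exact lt_irrefl _ hjv
    have hji1 : j ≠ i + 1 := by
      intro h; rw [h, ← heq] at hjv; exact lt_irrefl _ hjv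
    omega
  refine ⟨?_, ?_, ?_, ?_, ?_, ?_, ?_⟩
  · rw [hQlen]; omega
  · rw [hQlen]; omega
  · -- unique minimum
    obtain ⟨m, ⟨hm, hmmin⟩, hmu⟩ := hmin
    have hmv : |P.getD m 0| < |P.getD i 0| := by
      obtain ⟨j, hj, hjv⟩ := hlt
      exact lt_of_le_of_lt (hmmin j hj) hjv
    have hmi : m ≠ i := fun h => by rw [h] at hmv; exact lt_irrefl _ hmv
    have hmi1 : m ≠ i + 1 := by
      intro h; rw [h, ← heq] at hmv; exact lt_irrefl _ hmv
    obtain ⟨m', hm'd, hm'lt⟩ := hsurj m hm hmi hmi1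
    refine ⟨m', ⟨hm'lt, ?_⟩, ?_⟩
    · intro k hk
      simp only [hQget]
      rw [hm'd]
      exact hmmin _ (hdlt k (hQlen ▸ hk))
    · rintro y ⟨hy, hymin⟩
      have hyv : |P.getD (delIdx i y) 0| ≤ |P.getD m 0| := by
        have h0 := hymin m' hm'lt
        simp only [hQget] at h0
        rw [hm'd] at h0
        exact h0
      have hyP : ∀ j, j < n → |P.getD (delIdx i y) 0| ≤ |P.getD j 0| := by
        intro j hj
        rcases eq_or_ne j i with rfl | hji
        · exact le_of_lt (lt_of_le_of_lt hyv hmv)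
        rcases eq_or_ne j (i+1) with rfl | hji1
        · rw [← heq]; exact le_of_lt (lt_of_le_of_lt hyv hmv)
        · obtain ⟨k, hkd, hk⟩ := hsurj j hj hji hji1
          have h0 := hymin k hk
          simp only [hQget] at h0
          rw [hkd] at h0
          exact h0
      have hfin : delIdx i y = m := hmu _ ⟨hdlt y (hQlen ▸ hy), hyP⟩
      exact delIdx_inj (hfin.trans hm'd.symm)
  · -- unique maximum
    obtain ⟨m, ⟨hm, hmmax⟩, hmu⟩ := hmax
    have hmv : |P.getD i 0| < |P.getD m 0| := by
      obtain ⟨j, hj, hjv⟩ := hgt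
      exact lt_of_lt_of_le hjv (hmmax j hj)
    have hmi : m ≠ i := fun h => by rw [h] at hmv; exact lt_irrefl _ hmv
    have hmi1 : m ≠ i + 1 := by
      intro h; rw [h, ← heq] at hmv; exact lt_irrefl _ hmv
    obtain ⟨m', hm'd, hm'lt⟩ := hsurj m hm hmi hmi1
    refine ⟨m', ⟨hm'lt, ?_⟩, ?_⟩
    · intro k hk
      simp only [hQget]
      rw [hm'd]
      exact hmmax _ (hdlt k (hQlen ▸ hk))
    · rintro y ⟨hy, hymax⟩
      have hyv : |P.getD m 0| ≤ |P.getD (delIdx i y) 0| := by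
        have h0 := hymax m' hm'lt
        simp only [hQget] at h0
        rw [hm'd] at h0
        exact h0
      have hyP : ∀ j, j < n → |P.getD j 0| ≤ |P.getD (delIdx i y) 0| := by
        intro j hj
        rcases eq_or_ne j i with rfl | hji
        · exact le_of_lt (lt_of_lt_of_le hmv hyv)
        rcases eq_or_ne j (i+1) with rfl | hji1
        · rw [← heq]; exact le_of_lt (lt_of_lt_of_le hmv hyv)
        · obtain ⟨k, hkd, hk⟩ := hsurj j hj hji hji1
          have h0 := hymax k hk
          simp only [hQget] at h0
          rw [hkd] at h0
          exact h0
      have hfin : delIdx i y = m := hmu _ ⟨hdlt y (hQlen ▸ hy), hyP⟩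
      exact delIdx_inj (hfin.trans hm'd.symm)
  · -- pairing of intermediate values
    intro k hk hsm hla
    have hkn : delIdx i k < n := hdlt k (hQlen ▸ hk)
    have hkni : delIdx i k ≠ i := delIdx_ne.1
    have hkni1 : delIdx i k ≠ i + 1 := delIdx_ne.2
    obtain ⟨a, ha, hav⟩ := hsm
    obtain ⟨b, hb, hbv⟩ := hla
    simp only [hQget] at hav hbv
    obtain ⟨p, ⟨hp, hpk, hpv⟩, hpu⟩ := hpair (delIdx i k) hkn
      ⟨delIdx i a, hdlt a (hQlen ▸ ha), hav⟩
      ⟨delIdx i b, hdlt b (hQlen ▸ hb), hbv⟩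
    have hpvne : |P.getD p 0| ≠ |P.getD i 0| := by
      rw [hpv]; exact hC _ hkn hkni hkni1
    have hpi : p ≠ i := fun h => hpvne (by rw [h])
    have hpi1 : p ≠ i + 1 := fun h => hpvne (by rw [h, heq])
    obtain ⟨p', hp'd, hp'lt⟩ := hsurj p hp hpi hpi1
    refine ⟨p', ⟨hp'lt, ?_, ?_⟩, ?_⟩
    · intro h; apply hpk; rw [← hp'd, h]
    · simp only [hQget]; rw [hp'd]; exact hpv
    · rintro y ⟨hy, hyk, hyv⟩
      simp only [hQget] at hyv
      have hfin : delIdx i y = p :=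
        hpu _ ⟨hdlt y (hQlen ▸ hy), fun h => hyk (delIdx_inj h), hyv⟩
      exact delIdx_inj (hfin.trans hp'd.symm)
  · -- condition (5)
    intro k hk2 hk1
    have hk1n : k + 1 < n - 2 := hQlen ▸ hk1
    simp only [hQget]
    rcases lt_trichotomy (k+1) i with h | h | h
    · have e1 : delIdx i k = k := by unfold delIdx; split_ifs <;> omega
      have e2 : delIdx i (k+1) = k+1 := by unfold delIdx; split_ifs <;> omega
      rw [e1, e2]; exact h5 k hk2 (by omega)
    · subst h
      have e1 : delIdx (k+1) k = k := by unfold delIdx; split_ifs <;> omega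
      have e2 : delIdx (k+1) (k+1) = k+3 := by unfold delIdx; split_ifs <;> omega
      rw [e1, e2]
      have hA := h5 k hk2 (by omega)
      have hB := h5 (k+2) (by omega) (by omega)
      have hv : P.getD (k+1) 0 = P.getD (k+2) 0 := heq
      refine ⟨?_, ?_⟩
      · calc P.getD k 0 ≤ P.getD (k+1) 0 := hA.1
          _ = P.getD (k+2) 0 := hv
          _ ≤ P.getD (k+3) 0 := hB.1
      · have h1 := hA.2
        have h2 := hB.2
        rw [← hv] at h2
        nlinarith [mul_pos h1 h2, sq_nonneg (P.getD (k+1) 0)]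
    · have e1 : delIdx i k = k+2 := by unfold delIdx; split_ifs <;> omega
      have e2 : delIdx i (k+1) = k+3 := by unfold delIdx; split_ifs <;> omega
      rw [e1, e2]; exact h5 (k+2) (by omega) (by omega)
  · -- condition (6)
    intro k hk2 hk1
    have hk1n : k + 1 < n - 2 := hQlen ▸ hk1
    rintro ⟨j', hj', hbad⟩
    simp only [hQget] at hbad
    have hjn : delIdx i j' < n := hdlt j' (hQlen ▸ hj')
    have hjC : |P.getD (delIdx i j') 0| ≠ |P.getD i 0| :=
      hC _ hjn delIdx_ne.1 delIdx_ne.2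
    rcases lt_trichotomy (k+1) i with h | h | h
    · have e1 : delIdx i k = k := by unfold delIdx; split_ifs <;> omega
      have e2 : delIdx i (k+1) = k+1 := by unfold delIdx; split_ifs <;> omega
      rw [e1, e2] at hbad
      exact h6 k hk2 (by omega) ⟨delIdx i j', hjn, hbad⟩
    · subst h
      have e1 : delIdx (k+1) k = k := by unfold delIdx; split_ifs <;> omega
      have e2 : delIdx (k+1) (k+1) = k+3 := by unfold delIdx; split_ifs <;> omega
      rw [e1, e2] at hbad
      have hv : P.getD (k+1) 0 = P.getD (k+2) 0 := heq
      rcases hbad with ⟨hb1, hb2⟩ | ⟨hb1, hb2⟩ <;>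
        rcases lt_or_gt_of_ne hjC with hv' | hv'
      · exact h6 k hk2 (by omega) ⟨delIdx (k+1) j', hjn, Or.inl ⟨hb1, hv'⟩⟩
      · exact h6 (k+2) (by omega) (by omega)
          ⟨delIdx (k+1) j', hjn, Or.inl ⟨by rw [← hv]; exact hv', hb2⟩⟩
      · exact h6 (k+2) (by omega) (by omega)
          ⟨delIdx (k+1) j', hjn, Or.inr ⟨hb1, by rw [← hv]; exact hv'⟩⟩
      · exact h6 k hk2 (by omega) ⟨delIdx (k+1) j', hjn, Or.inr ⟨hv', hb2⟩⟩
    · have e1 : delIdx i k = k+2 := by unfold delIdx; split_ifs <;> omega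
      have e2 : delIdx i (k+1) = k+3 := by unfold delIdx; split_ifs <;> omega
      rw [e1, e2] at hbad
      exact h6 (k+2) (by omega) (by omega) ⟨delIdx i j', hjn, hbad⟩


/-- cde preserves pointer lists. -/
theorem stmt6 (P : List ℤ) (hP : IsPointerList P) :
    IsPointerList (cde P) := by
  unfold cde
  split_ifs with h
  · exact key P hP _ (Nat.find_spec h).1 (Nat.find_spec h).2
  · exact hP
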